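/- (Lagrange inversion, power case) Let F(x) be a formal power series over a commutative ring with F(0)=0 satisfying F(x) = x·φ(F(x)), where φ(t) is a formal power series with φ(0) invertible. Then for all integers n ≥ k ≥ 1, n·[x^n] (F(x))^k = k·[t^{n-k}] (φ(t))^n. -/

import Mathlib

open PowerSeries Finset

namespace LagrangeAux

variable {S : Type*} [CommRing S]

/-- Coefficient `m` of a power only depends on coefficients `≤ m`. -/
lemma coeff_pow_congr {A B : PowerSeries S} {m : ℕ}
    (h : ∀ i ≤ m, coeff i A = coeff i B) (k : ℕ) :
    coeff m (A ^ k) = coeff m (B ^ k) := by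
  have ht : trunc (m + 1) A = trunc (m + 1) B := by
    apply Polynomial.ext
    intro i
    rw [coeff_trunc, coeff_trunc]
    split_ifs with hi
    · exact h i (Nat.lt_succ_iff.mp hi)
    · rfl
  rw [← coeff_coe_trunc_of_lt (Nat.lt_succ_self m) (f := A ^ k), ← trunc_trunc_pow,
    ht, trunc_trunc_pow, coeff_coe_trunc_of_lt (Nat.lt_succ_self m)]

lemma coeff_pow_eq_zero {F : PowerSeries S} (hF0 : constantCoeff F = 0)
    {m k : ℕ} (h : m < k) : coeff m (F ^ k) = 0 := by
  obtain ⟨c, hc⟩ := pow_dvd_pow_of_dvd (X_dvd_iff.mpr hF0) k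
  rw [hc, coeff_X_pow_mul', if_neg (not_le.mpr h)]

/-- Composition multiplicativity at the level of coefficients. -/
lemma coeff_pow_comp {φ F G : PowerSeries S} (hF0 : constantCoeff F = 0)
    (hGc : ∀ i : ℕ, coeff i G =
      ∑ j ∈ Finset.range (i + 1), coeff j φ * coeff i (F ^ j))
    (m k : ℕ) :
    coeff m (G ^ k) =
      ∑ j ∈ Finset.range (m + 1), coeff j (φ ^ k) * coeff m (F ^ j) := by
  classical
  set P : Polynomial S := trunc (m + 1) φ with hP
  set A : PowerSeries S := Polynomial.eval₂ (C) F P with hA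
  have hAi : ∀ i : ℕ, coeff i A =
      ∑ j ∈ Finset.range (m + 1), coeff j φ * coeff i (F ^ j) := by
    intro i
    rw [hA, hP, eval₂_trunc_eq_sum_range, map_sum]
    refine Finset.sum_congr rfl fun j _ => ?_
    rw [coeff_C_mul]
  have hAG : ∀ i ≤ m, coeff i G = coeff i A := by
    intro i hi
    rw [hAi i, hGc i]
    refine Finset.sum_subset (Finset.range_subset_range.mpr (by omega)) ?_
    intro j hj hj'
    simp only [Finset.mem_range, not_lt] at hj'
    rw [coeff_pow_eq_zero hF0 (by omega), mul_zero]
  rw [coeff_pow_congr hAG k]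
  have hAk : A ^ k = Polynomial.eval₂ (C) F (P ^ k) := by
    have hre : ∀ q : Polynomial S, Polynomial.eval₂ (C) F q
        = Polynomial.eval₂RingHom (C) F q := fun q => rfl
    rw [hA, hre, hre, map_pow]
  have hdeg : (P ^ k).natDegree < k * m + m + 1 := by
    calc (P ^ k).natDegree ≤ k * P.natDegree := Polynomial.natDegree_pow_le
    _ ≤ k * m := by
        exact Nat.mul_le_mul_left _ (Nat.lt_succ_iff.mp (natDegree_trunc_lt φ m))
    _ < k * m + m + 1 := by omega
  rw [hAk, Polynomial.eval₂_eq_sum_range' (C) hdeg F, map_sum]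
  have step : ∀ j ∈ Finset.range (k * m + m + 1),
      coeff m (C ((P ^ k).coeff j) * F ^ j) =
      (if j ≤ m then coeff j (φ ^ k) * coeff m (F ^ j) else 0) := by
    intro j _
    rw [coeff_C_mul]
    split_ifs with hjm
    · congr 1
      have : (P ^ k).coeff j = coeff j (((P : PowerSeries S)) ^ k) := by
        rw [← Polynomial.coe_pow, Polynomial.coeff_coe]
      rw [this]
      refine coeff_pow_congr (fun i hi => ?_) k
      rw [Polynomial.coeff_coe, hP, coeff_trunc, if_pos (by omega)]
    · rw [coeff_pow_eq_zero hF0 (by omega), mul_zero]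
  rw [Finset.sum_congr rfl step, Finset.sum_ite, Finset.sum_const_zero, add_zero]
  apply Finset.sum_nbij' (fun j => j) (fun j => j) <;>
    simp +contextual [Nat.lt_succ_iff]
  omega


/-- The key Lagrange inversion identity, over a characteristic-zero domain. -/
lemma key {S : Type*} [CommRing S] [IsDomain S] [CharZero S] (φ F : PowerSeries S)
    (hF0 : constantCoeff F = 0)
    (hrec : ∀ m : ℕ, coeff (m + 1) F =
      ∑ j ∈ Finset.range (m + 1), coeff j φ * coeff m (F ^ j)) :
    ∀ n k : ℕ, 1 ≤ k → k ≤ n →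
      (n : S) * coeff n (F ^ k) = (k : S) * coeff (n - k) (φ ^ n) := by
  classical
  set G : PowerSeries S := mk fun i =>
    ∑ j ∈ Finset.range (i + 1), coeff j φ * coeff i (F ^ j) with hGdef
  have hGc : ∀ i : ℕ, coeff i G =
      ∑ j ∈ Finset.range (i + 1), coeff j φ * coeff i (F ^ j) := fun i => coeff_mk i _
  have hXG : F = X * G := by
    ext n
    cases n with
    | zero => simp [coeff_zero_eq_constantCoeff, hF0, constantCoeff_X]
    | succ m => rw [coeff_succ_X_mul, hGc, hrec]
  have hG0 : constantCoeff G = coeff 0 φ := by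
    rw [← coeff_zero_eq_constantCoeff_apply, hGc]
    simp
  have hfG : ∀ n k : ℕ, k ≤ n → coeff n (F ^ k) = coeff (n - k) (G ^ k) := by
    intro n k hkn
    conv_lhs => rw [hXG, mul_pow, ← Nat.sub_add_cancel hkn]
    exact coeff_X_pow_mul (G ^ k) k (n - k)
  intro n
  induction n using Nat.strong_induction_on with
  | _ n IH =>
    intro k hk1 hkn
    rcases eq_or_lt_of_le hkn with heq | hlt
    · subst heq
      rw [hfG k k le_rfl, Nat.sub_self]
      rw [coeff_zero_eq_constantCoeff_apply, coeff_zero_eq_constantCoeff_apply,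
        map_pow, map_pow, hG0, coeff_zero_eq_constantCoeff_apply]
    · set m : ℕ := n - k with hm
      have hm1 : 1 ≤ m := by omega
      have hmn : m < n := by omega
      set W : S := coeff (m - 1) (φ ^ (n - 1) * d⁄dX S φ) with hW
      have hcomp := coeff_pow_comp hF0 hGc m k
      -- Claim A
      have hA : (m : S) * coeff m (G ^ k) = (k : S) * W := by
        have hsum1 : (m : S) * coeff m (G ^ k)
            = ∑ j ∈ Finset.range (m + 1),
                coeff j (φ ^ k) * ((j : S) * coeff (m - j) (φ ^ m)) := by
          rw [hcomp, Finset.mul_sum]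
          refine Finset.sum_congr rfl fun j hj => ?_
          rw [Finset.mem_range] at hj
          rcases Nat.eq_zero_or_pos j with hj0 | hj1
          · subst hj0
            simp [coeff_one, show m ≠ 0 by omega]
          · calc (m : S) * (coeff j (φ ^ k) * coeff m (F ^ j))
                = coeff j (φ ^ k) * ((m : S) * coeff m (F ^ j)) := by ring
              _ = coeff j (φ ^ k) * ((j : S) * coeff (m - j) (φ ^ m)) := by
                  rw [IH m hmn j hj1 (by omega)]
        have hsum2 : ∑ j ∈ Finset.range (m + 1),
              coeff j (φ ^ k) * ((j : S) * coeff (m - j) (φ ^ m))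
            = coeff (m - 1) (d⁄dX S (φ ^ k) * φ ^ m) := by
          rw [coeff_mul, Finset.Nat.sum_antidiagonal_eq_sum_range_succ_mk]
          have hm' : m - 1 + 1 = m := by omega
          have hm'' : (m - 1).succ = m := by omega
          rw [hm'', Finset.sum_range_succ']
          simp only [Nat.cast_zero, zero_mul, mul_zero, add_zero]
          refine Finset.sum_congr rfl fun i hi => ?_
          rw [coeff_derivative]
          have h1 : m - (i + 1) = m - 1 - i := by omega
          rw [h1]
          push_cast
          ring
        have hsum3 : coeff (m - 1) (d⁄dX S (φ ^ k) * φ ^ m) = (k : S) * W := by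
          rw [Derivation.leibniz_pow, smul_mul_assoc, map_nsmul, smul_eq_mul,
            nsmul_eq_mul]
          congr 1
          rw [hW]
          congr 1
          have hkm : k - 1 + m = n - 1 := by omega
          calc φ ^ (k - 1) * d⁄dX S φ * φ ^ m = φ ^ (k - 1) * φ ^ m * d⁄dX S φ := by ring
            _ = φ ^ (n - 1) * d⁄dX S φ := by rw [← pow_add, hkm]
        rw [hsum1, hsum2, hsum3]
      -- Claim B
      have hB : (m : S) * coeff m (φ ^ n) = (n : S) * W := by
        have h1 : coeff (m - 1) (d⁄dX S (φ ^ n)) = coeff m (φ ^ n) * (m : S) := by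
          rw [coeff_derivative]
          have h3 : m - 1 + 1 = m := by omega
          rw [h3, Nat.cast_sub hm1]
          push_cast
          ring
        have h2 : coeff (m - 1) (d⁄dX S (φ ^ n)) = (n : S) * W := by
          rw [Derivation.leibniz_pow, map_nsmul, smul_eq_mul, nsmul_eq_mul, hW]
        calc (m : S) * coeff m (φ ^ n) = coeff m (φ ^ n) * (m : S) := by ring
          _ = coeff (m - 1) (d⁄dX S (φ ^ n)) := h1.symm
          _ = (n : S) * W := h2
      have hmS : (m : S) ≠ 0 := Nat.cast_ne_zero.mpr (by omega)
      apply mul_left_cancel₀ hmS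
      calc (m : S) * ((n : S) * coeff n (F ^ k))
          = (n : S) * ((m : S) * coeff m (G ^ k)) := by rw [hfG n k hkn]; ring
        _ = (n : S) * ((k : S) * W) := by rw [hA]
        _ = (k : S) * ((n : S) * W) := by ring
        _ = (k : S) * ((m : S) * coeff m (φ ^ n)) := by rw [← hB]
        _ = (m : S) * ((k : S) * coeff m (φ ^ n)) := by ring

/-- Successive polynomial approximations to the solution of `F = X·φ(F)`. -/
noncomputable def Fseq (φ : PowerSeries S) : ℕ → PowerSeries S
  | 0 => 0
  | m + 1 => Fseq φ m +
      C (∑ j ∈ Finset.range (m + 1), coeff j φ * coeff m ((Fseq φ m) ^ j)) * X ^ (m + 1)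

/-- The universal solution of `F = X·φ(F)`. -/
noncomputable def Fu (φ : PowerSeries S) : PowerSeries S := mk fun n => coeff n (Fseq φ n)

lemma coeff_Fseq_high (φ : PowerSeries S) {i m : ℕ} (h : m < i) :
    coeff i (Fseq φ m) = 0 := by
  induction m with
  | zero => simp [Fseq]
  | succ m ih =>
    rw [Fseq, map_add, ih (by omega), coeff_C_mul_X_pow, if_neg (by omega), zero_add]

lemma coeff_Fseq_stable (φ : PowerSeries S) {i m : ℕ} (h : i ≤ m) :
    coeff i (Fseq φ m) = coeff i (Fseq φ i) := by
  induction m with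
  | zero =>
    have : i = 0 := by omega
    subst this; rfl
  | succ m ih =>
    rcases Nat.lt_or_ge i (m + 1) with h' | h'
    · rw [Fseq, map_add, coeff_C_mul_X_pow, if_neg (by omega), add_zero, ih (by omega)]
    · have : i = m + 1 := by omega
      subst this; rfl

lemma coeff_Fu (φ : PowerSeries S) (n : ℕ) : coeff n (Fu φ) = coeff n (Fseq φ n) :=
  coeff_mk _ _

lemma Fu_agree (φ : PowerSeries S) {m : ℕ} : ∀ i ≤ m, coeff i (Fseq φ m) = coeff i (Fu φ) :=
  fun i hi => by rw [coeff_Fu, coeff_Fseq_stable φ hi]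

lemma constantCoeff_Fu (φ : PowerSeries S) : constantCoeff (Fu φ) = 0 := by
  rw [← coeff_zero_eq_constantCoeff_apply, coeff_Fu]
  simp [Fseq]

lemma hrec_Fu (φ : PowerSeries S) (m : ℕ) :
    coeff (m + 1) (Fu φ) =
      ∑ j ∈ Finset.range (m + 1), coeff j φ * coeff m ((Fu φ) ^ j) := by
  rw [coeff_Fu, Fseq, map_add, coeff_Fseq_high φ (by omega), zero_add,
    coeff_C_mul_X_pow, if_pos rfl]
  exact Finset.sum_congr rfl fun j _ => by rw [coeff_pow_congr (Fu_agree φ) j]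

/-- Transfer along a ring hom. -/
lemma map_Fu {S R : Type*} [CommRing S] [CommRing R] (h : S →+* R)
    (φ : PowerSeries S) (F : PowerSeries R)
    (hF0 : constantCoeff F = 0)
    (hrecF : ∀ m : ℕ, coeff (m + 1) F =
      ∑ j ∈ Finset.range (m + 1), h (coeff j φ) * coeff m (F ^ j)) :
    PowerSeries.map h (Fu φ) = F := by
  have main : ∀ n : ℕ, coeff n (PowerSeries.map h (Fu φ)) = coeff n F := by
    intro n
    induction n using Nat.strong_induction_on with
    | _ n IH =>
      cases n with
      | zero =>
        rw [coeff_map, coeff_zero_eq_constantCoeff_apply, constantCoeff_Fu, map_zero,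
          coeff_zero_eq_constantCoeff_apply, hF0]
      | succ m =>
        rw [coeff_map, hrec_Fu, map_sum, hrecF m]
        refine Finset.sum_congr rfl fun j _ => ?_
        rw [map_mul]
        congr 1
        have hc : coeff m ((PowerSeries.map h (Fu φ)) ^ j) = coeff m (F ^ j) :=
          coeff_pow_congr (fun i hi => IH i (by omega)) j
        rw [← hc, ← map_pow, coeff_map]
  ext n
  exact main n

end LagrangeAux


/-- **Lagrange inversion, power case.**  Let `F` be a formal power series over a commutative
ring `R` with `F(0) = 0`, satisfying `F(x) = x·φ(F(x))` where `φ` is a power series whose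
constant coefficient is invertible.  The composite `φ(F(x))` is encoded as the power series
`G` whose `n`-th coefficient is `∑_{k=0}^{n} φ_k · [x^n](F^k)` (this is the usual
coefficientwise definition of composition, valid since `F(0) = 0`).  Then for all
`n ≥ k ≥ 1` one has `n·[x^n](F^k) = k·[t^(n-k)](φ^n)`. -/
theorem stmt_3 {R : Type*} [CommRing R] (F φ G : PowerSeries R)
    (hF0 : PowerSeries.constantCoeff F = 0)
    (hφ0 : IsUnit (PowerSeries.constantCoeff φ))
    (hG : ∀ n : ℕ, PowerSeries.coeff n G =
      ∑ k ∈ Finset.range (n + 1),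
        PowerSeries.coeff k φ * PowerSeries.coeff n (F ^ k))
    (hFeq : F = PowerSeries.X * G)
    (n k : ℕ) (hk : 1 ≤ k) (hkn : k ≤ n) :
    (n : R) * PowerSeries.coeff n (F ^ k)
      = (k : R) * PowerSeries.coeff (n - k) (φ ^ n) := by
  classical
  open LagrangeAux in
  set S₀ := MvPolynomial ℕ ℤ with hS₀
  set φ' : PowerSeries S₀ := PowerSeries.mk fun i => MvPolynomial.X i with hφ'
  set h : S₀ →+* R :=
    MvPolynomial.eval₂Hom (Int.castRingHom R) (fun i => PowerSeries.coeff i φ) with hh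
  have hhX : ∀ i : ℕ, h (coeff i φ') = coeff i φ := by
    intro i
    rw [hφ', coeff_mk]
    exact MvPolynomial.eval₂Hom_X' _ _ _
  have hrecR : ∀ m : ℕ, coeff (m + 1) F =
      ∑ j ∈ Finset.range (m + 1), h (coeff j φ') * coeff m (F ^ j) := by
    intro m
    conv_lhs => rw [hFeq]
    rw [coeff_succ_X_mul, hG m]
    exact Finset.sum_congr rfl fun j _ => by rw [hhX]
  have hmap : PowerSeries.map h (Fu φ') = F := map_Fu h φ' F hF0 hrecR
  have hkey := key φ' (Fu φ') (constantCoeff_Fu φ') (hrec_Fu φ') n k hk hkn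
  have hmapφ : PowerSeries.map h φ' = φ := by
    ext i
    rw [coeff_map, hhX]
  have hcF : coeff n (F ^ k) = h (coeff n ((Fu φ') ^ k)) := by
    rw [← hmap, ← map_pow, coeff_map]
  have hcφ : coeff (n - k) (φ ^ n) = h (coeff (n - k) (φ' ^ n)) := by
    rw [← hmapφ, ← map_pow, coeff_map]
  rw [hcF, hcφ]
  calc (n : R) * h (coeff n ((Fu φ') ^ k))
      = h ((n : S₀) * coeff n ((Fu φ') ^ k)) := by rw [map_mul, map_natCast]
    _ = h ((k : S₀) * coeff (n - k) (φ' ^ n)) := by rw [hkey]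
    _ = (k : R) * h (coeff (n - k) (φ' ^ n)) := by rw [map_mul, map_natCast]
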